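/- Let G = (V, E) be a finite simple graph with edge weights p : E → ℝ≥0, and let k be a natural number. Define g : 2^V → ℝ≥0 by g(S) = max { Σ_{e ∈ F} p(e) : F ⊆ edges(S), |F| ≤ k }. Then g is submodular: for all S ⊆ Q ⊆ V and all v ∈ V \ Q, g(S ∪ {v}) - g(S) ≥ g(Q ∪ {v}) - g(Q). -/

import Mathlib

open Finset
open scoped Classical

variable {V : Type*} [Fintype V] [DecidableEq V]

section Aux
variable {α : Type*} [DecidableEq α]

noncomputable def fkAux (p : α → ℝ) (k : ℕ) (A : Finset α) : ℝ :=
  (A.powerset.filter (fun F => F.card ≤ k)).sup' ⟨∅, by simp⟩ (fun F => ∑ e ∈ F, p e)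

lemma le_fkAux {p : α → ℝ} {k : ℕ} {A F : Finset α} (hF : F ⊆ A) (hc : F.card ≤ k) :
    ∑ e ∈ F, p e ≤ fkAux p k A := by
  unfold fkAux
  exact Finset.le_sup' (fun F => ∑ e ∈ F, p e) (Finset.mem_filter.mpr ⟨Finset.mem_powerset.mpr hF, hc⟩)

lemma fkAux_exists (p : α → ℝ) (k : ℕ) (A : Finset α) :
    ∃ F, F ⊆ A ∧ F.card ≤ k ∧ fkAux p k A = ∑ e ∈ F, p e := by
  obtain ⟨F, hF, h⟩ := Finset.exists_mem_eq_sup'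
    (⟨∅, by simp⟩ : (A.powerset.filter (fun F => F.card ≤ k)).Nonempty)
    (fun F => ∑ e ∈ F, p e)
  simp only [Finset.mem_filter, Finset.mem_powerset] at hF
  exact ⟨F, hF.1, hF.2, h⟩

lemma fkAux_mono {p : α → ℝ} {k : ℕ} {A B : Finset α} (hAB : A ⊆ B) :
    fkAux p k A ≤ fkAux p k B := by
  apply Finset.sup'_le
  intro F hF
  simp only [Finset.mem_filter, Finset.mem_powerset] at hF
  exact le_fkAux (hF.1.trans hAB) hF.2

lemma fkAux_submodular (p : α → ℝ) (k : ℕ) (A B : Finset α) :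
    fkAux p k (A ∪ B) + fkAux p k (A ∩ B) ≤ fkAux p k A + fkAux p k B := by
  obtain ⟨F, hFsub, hFc, hFeq⟩ := fkAux_exists p k (A ∪ B)
  obtain ⟨F', hF'sub, hF'c, hF'eq⟩ := fkAux_exists p k (A ∩ B)
  set FA := F ∩ A with hFA
  set FB := F \ A with hFB
  set C := F' ∩ F with hC
  set D := F' \ F with hD
  have hCFA : C ⊆ FA := by
    intro e he
    simp only [hC, hFA, Finset.mem_inter] at he ⊢
    exact ⟨he.2, (Finset.mem_inter.mp (hF'sub he.1)).1⟩
  set m := min D.card (k - FA.card) with hm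
  obtain ⟨D1, hD1sub, hD1card⟩ := Finset.exists_subset_card_eq (s := D) (n := m) (min_le_left _ _)
  set D2 := D \ D1 with hD2
  -- cardinality facts
  have hFApFB : FA.card + FB.card = F.card := Finset.card_inter_add_card_sdiff F A
  have hCpD : C.card + D.card = F'.card := Finset.card_inter_add_card_sdiff F' F
  have hD2card : D2.card = D.card - m := by rw [hD2, Finset.card_sdiff_of_subset hD1sub, hD1card]
  have hCcard : C.card ≤ FA.card := Finset.card_le_card hCFA
  have hFAle : FA.card ≤ F.card := Finset.card_le_card (Finset.inter_subset_left)
  have hmin : m = D.card ∨ m = k - FA.card := min_choice _ _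
  -- subset facts
  have hFAsubA : FA ⊆ A := Finset.inter_subset_right
  have hDsubAB : D ⊆ A ∩ B := fun e he => hF'sub (Finset.mem_sdiff.mp he).1
  have hCsubAB : C ⊆ A ∩ B := fun e he => hF'sub (Finset.mem_inter.mp he).1
  have hFBsubB : FB ⊆ B := by
    intro e he
    rw [hFB, Finset.mem_sdiff] at he
    rcases Finset.mem_union.mp (hFsub he.1) with h | h
    · exact absurd h he.2
    · exact h
  -- disjointness
  have hdFD : Disjoint FA D1 := by
    apply Finset.disjoint_left.mpr
    intro e heFA heD1
    exact (Finset.mem_sdiff.mp (hD1sub heD1)).2 (Finset.mem_inter.mp heFA).1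
  have hdFBC : Disjoint FB C := by
    apply Finset.disjoint_left.mpr
    intro e heFB heC
    exact (Finset.mem_sdiff.mp heFB).2 (Finset.mem_inter.mp (hCFA heC)).2
  have hdFBCD2 : Disjoint (FB ∪ C) D2 := by
    apply Finset.disjoint_left.mpr
    intro e he heD2
    have heD : e ∈ D := (Finset.mem_sdiff.mp heD2).1
    have : e ∉ F := (Finset.mem_sdiff.mp heD).2
    rcases Finset.mem_union.mp he with h | h
    · exact this (Finset.mem_sdiff.mp h).1
    · exact this (Finset.mem_inter.mp h).2
  have hdD1D2 : Disjoint D1 D2 := Finset.disjoint_sdiff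
  -- weights
  have wF : ∑ e ∈ FA, p e + ∑ e ∈ FB, p e = ∑ e ∈ F, p e :=
    Finset.sum_inter_add_sum_sdiff F A p
  have wF' : ∑ e ∈ C, p e + ∑ e ∈ D, p e = ∑ e ∈ F', p e :=
    Finset.sum_inter_add_sum_sdiff F' F p
  have wD : ∑ e ∈ D1, p e + ∑ e ∈ D2, p e = ∑ e ∈ D, p e := by
    rw [← Finset.sum_union hdD1D2, Finset.union_sdiff_of_subset hD1sub]
  -- the two competitor sets
  have hGA : ∑ e ∈ FA ∪ D1, p e ≤ fkAux p k A := by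
    apply le_fkAux
    · exact Finset.union_subset hFAsubA
        (fun e he => (Finset.mem_inter.mp (hDsubAB (hD1sub he))).1)
    · calc (FA ∪ D1).card ≤ FA.card + D1.card := Finset.card_union_le _ _
        _ ≤ k := by rw [hD1card]; omega
  have hGB : ∑ e ∈ (FB ∪ C) ∪ D2, p e ≤ fkAux p k B := by
    apply le_fkAux
    · refine Finset.union_subset (Finset.union_subset hFBsubB ?_) ?_
      · exact fun e he => (Finset.mem_inter.mp (hCsubAB he)).2
      · exact fun e he => (Finset.mem_inter.mp (hDsubAB (Finset.mem_sdiff.mp he).1)).2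
    · calc ((FB ∪ C) ∪ D2).card ≤ (FB ∪ C).card + D2.card := Finset.card_union_le _ _
        _ ≤ FB.card + C.card + D2.card := by
            have := Finset.card_union_le FB C; omega
        _ ≤ k := by
            rw [hD2card]
            rcases hmin with h | h <;> omega
  have key : ∑ e ∈ FA ∪ D1, p e + ∑ e ∈ (FB ∪ C) ∪ D2, p e
      = ∑ e ∈ F, p e + ∑ e ∈ F', p e := by
    rw [Finset.sum_union hdFD, Finset.sum_union hdFBCD2, Finset.sum_union hdFBC]
    linarith
  rw [hFeq, hF'eq]
  linarith

end Aux

/-- The set of edges of `G` incident to at least one vertex of `S`. -/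
def edgesOf (G : SimpleGraph V) [DecidableRel G.Adj] (S : Finset V) : Finset (Sym2 V) :=
  G.edgeFinset.filter (fun e => ∃ v ∈ S, v ∈ e)

/-- `gSum G p k S` is the maximum of `∑ e ∈ F, p e` over `F ⊆ edgesOf G S` with `|F| ≤ k`. -/
noncomputable def gSum (G : SimpleGraph V) [DecidableRel G.Adj] (p : Sym2 V → ℝ) (k : ℕ)
    (S : Finset V) : ℝ :=
  ((edgesOf G S).powerset.filter (fun F => F.card ≤ k)).sup' ⟨∅, by simp⟩
    (fun F => ∑ e ∈ F, p e)

/-- `g` is submodular (diminishing returns form). -/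
lemma gSum_eq_fkAux (G : SimpleGraph V) [DecidableRel G.Adj] (p : Sym2 V → ℝ) (k : ℕ)
    (S : Finset V) : gSum G p k S = fkAux p k (edgesOf G S) := rfl

lemma edgesOf_mono (G : SimpleGraph V) [DecidableRel G.Adj] {S T : Finset V} (h : S ⊆ T) :
    edgesOf G S ⊆ edgesOf G T := by
  intro e he
  simp only [edgesOf, Finset.mem_filter] at he ⊢
  obtain ⟨h1, w, hw, hwe⟩ := he
  exact ⟨h1, w, h hw, hwe⟩

lemma edgesOf_union (G : SimpleGraph V) [DecidableRel G.Adj] (S T : Finset V) :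
    edgesOf G (S ∪ T) = edgesOf G S ∪ edgesOf G T := by
  ext e
  simp only [edgesOf, Finset.mem_filter, Finset.mem_union]
  constructor
  · rintro ⟨h1, w, hw | hw, hwe⟩
    · exact Or.inl ⟨h1, w, hw, hwe⟩
    · exact Or.inr ⟨h1, w, hw, hwe⟩
  · rintro (⟨h1, w, hw, hwe⟩ | ⟨h1, w, hw, hwe⟩)
    · exact ⟨h1, w, Or.inl hw, hwe⟩
    · exact ⟨h1, w, Or.inr hw, hwe⟩

theorem stmt_3 (G : SimpleGraph V) [DecidableRel G.Adj] (p : Sym2 V → ℝ)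
    (hp : ∀ e, 0 ≤ p e) (k : ℕ) (S Q : Finset V) (hSQ : S ⊆ Q) (v : V) (hv : v ∉ Q) :
    gSum G p k (insert v S) - gSum G p k S ≥ gSum G p k (insert v Q) - gSum G p k Q := by
  have h1 : edgesOf G (insert v S) ∪ edgesOf G Q = edgesOf G (insert v Q) := by
    rw [← edgesOf_union]
    congr 1
    ext x
    simp only [Finset.mem_union, Finset.mem_insert]
    constructor
    · rintro (⟨rfl | h⟩ | h)
      · exact Or.inl rfl
      · exact Or.inr (hSQ h)
      · exact Or.inr h
    · rintro (rfl | h)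
      · exact Or.inl (Or.inl rfl)
      · exact Or.inr h
  have h2 : edgesOf G S ⊆ edgesOf G (insert v S) ∩ edgesOf G Q :=
    Finset.subset_inter (edgesOf_mono G (Finset.subset_insert _ _)) (edgesOf_mono G hSQ)
  have hsub := fkAux_submodular p k (edgesOf G (insert v S)) (edgesOf G Q)
  rw [h1] at hsub
  have hmon : fkAux p k (edgesOf G S)
      ≤ fkAux p k (edgesOf G (insert v S) ∩ edgesOf G Q) := fkAux_mono h2
  simp only [gSum_eq_fkAux]
  linarith
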